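/- arXiv:1611.01280 — 2 statements merged into one kernel-verified Lean document; each statement's English description precedes it below -/
import Mathlib

section
/- Let σ > 0, μ, r, γ, l ∈ ℝ with γ > 0. Define v(x) = [2l − 2(μ−r)x + σ²x² − 2x(1−x)(μ−r−σ²x)·γ/(1+γx)] / (σ²x²(1−x)²) + γ²/(1+γx)² on (0,1). Then there exists a polynomial p of degree at most 2 such that v(x) = p(x)/(σ²x²(1−x)²(1+γx)²) for all x ∈ (0,1); in particular, v has at most two zeros in (0,1) unless p ≡ 0. -/
theorem v_is_rational_with_quadratic_numerator (σ μ r γ l : ℝ) (hσ : 0 < σ) (hγ : 0 < γ)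
    (v : ℝ → ℝ)
    (hv : ∀ x ∈ Set.Ioo (0:ℝ) 1,
      v x = (2 * l - 2 * (μ - r) * x + σ^2 * x^2
              - 2 * x * (1 - x) * (μ - r - σ^2 * x) * (γ / (1 + γ * x)))
            / (σ^2 * x^2 * (1 - x)^2)
          + γ^2 / (1 + γ * x)^2) :
    ∃ p : Polynomial ℝ, p.degree ≤ 2 ∧
      (∀ x ∈ Set.Ioo (0:ℝ) 1,
        v x = p.eval x / (σ^2 * x^2 * (1 - x)^2 * (1 + γ * x)^2)) ∧
      (p ≠ 0 → {x ∈ Set.Ioo (0:ℝ) 1 | v x = 0}.Finite ∧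
        {x ∈ Set.Ioo (0:ℝ) 1 | v x = 0}.ncard ≤ 2) := by
  set c0 : ℝ := 2 * l with hc0
  set c1 : ℝ := 4 * γ * l - 2 * (μ - r) * (1 + γ) with hc1
  set c2 : ℝ := 2 * γ^2 * l - 2 * (μ - r) * (γ + γ^2) + σ^2 * (1 + γ)^2 with hc2
  refine ⟨Polynomial.C c0 + Polynomial.C c1 * Polynomial.X
      + Polynomial.C c2 * Polynomial.X ^ 2, ?_, ?_, ?_⟩
  · compute_degree
  · intro x hx
    obtain ⟨hx0, hx1⟩ := hx
    have hσ2 : σ^2 ≠ 0 := by positivity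
    have hxne : x ≠ 0 := ne_of_gt hx0
    have h1x : (1 : ℝ) - x ≠ 0 := by linarith
    have hgx : (1 : ℝ) + γ * x ≠ 0 := by nlinarith
    rw [hv x ⟨hx0, hx1⟩]
    simp only [Polynomial.eval_add, Polynomial.eval_mul, Polynomial.eval_pow,
      Polynomial.eval_C, Polynomial.eval_X, hc0, hc1, hc2]
    field_simp
    ring
  · intro hp
    have heval : ∀ x ∈ Set.Ioo (0:ℝ) 1,
        v x = (Polynomial.C c0 + Polynomial.C c1 * Polynomial.X
          + Polynomial.C c2 * Polynomial.X ^ 2).eval x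
          / (σ^2 * x^2 * (1 - x)^2 * (1 + γ * x)^2) := by
      intro x hx
      obtain ⟨hx0, hx1⟩ := hx
      have hσ2 : σ^2 ≠ 0 := by positivity
      have hxne : x ≠ 0 := ne_of_gt hx0
      have h1x : (1 : ℝ) - x ≠ 0 := by linarith
      have hgx : (1 : ℝ) + γ * x ≠ 0 := by nlinarith
      rw [hv x ⟨hx0, hx1⟩]
      simp only [Polynomial.eval_add, Polynomial.eval_mul, Polynomial.eval_pow,
        Polynomial.eval_C, Polynomial.eval_X, hc0, hc1, hc2]
      field_simp
      ring
    set p := Polynomial.C c0 + Polynomial.C c1 * Polynomial.X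
      + Polynomial.C c2 * Polynomial.X ^ 2 with hpdef
    have hsub : {x ∈ Set.Ioo (0:ℝ) 1 | v x = 0} ⊆ {x | p.IsRoot x} := by
      intro x hx
      obtain ⟨hmem, hvx⟩ := hx
      obtain ⟨hx0, hx1⟩ := hmem
      have h1x : (0:ℝ) < 1 - x := by linarith
      have hgx : (0:ℝ) < 1 + γ * x := by nlinarith
      have hD : σ^2 * x^2 * (1 - x)^2 * (1 + γ * x)^2 ≠ 0 := by positivity
      have h := heval x ⟨hx0, hx1⟩
      rw [hvx] at h
      have : p.eval x = 0 := by
        field_simp at h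
        linarith
      exact this
    have hfin : {x | p.IsRoot x}.Finite := Polynomial.finite_setOf_isRoot hp
    refine ⟨hfin.subset hsub, ?_⟩
    have hroots : {x | p.IsRoot x} = ↑p.roots.toFinset := by
      ext x
      simp [Polynomial.mem_roots, hp, Polynomial.IsRoot]
    have h1 : {x ∈ Set.Ioo (0:ℝ) 1 | v x = 0}.ncard ≤ {x | p.IsRoot x}.ncard :=
      Set.ncard_le_ncard hsub hfin
    have h2 : {x | p.IsRoot x}.ncard ≤ 2 := by
      rw [hroots, Set.ncard_coe_finset]
      calc p.roots.toFinset.card ≤ Multiset.card p.roots := p.roots.toFinset_card_le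
        _ ≤ p.natDegree := p.card_roots'
        _ ≤ 2 := by
            apply Polynomial.natDegree_le_iff_degree_le.mpr
            rw [hpdef]
            exact_mod_cast (by compute_degree : (Polynomial.C c0 + Polynomial.C c1 * Polynomial.X + Polynomial.C c2 * Polynomial.X ^ 2).degree ≤ 2)
    omega
end

section
/- In the one-sided Skorokhod problem: if w : [t_0, ∞) → ℝ is continuous with w(t_0) = a_0 and Y_t = w(t) + Z_t with Z continuous nondecreasing, Z_{t_0} = 0, Y_t ≥ a_0, and Z increases only when Y = a_0, then Z_t = −min_{s ∈ [t_0,t]} (w(s) − a_0) ∨ 0 = max_{s∈[t_0,t]} (a_0 − w(s))⁺. -/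
/-- Explicit solution of the one-sided Skorokhod reflection problem at a lower
boundary `a₀`. -/
theorem skorokhod_one_sided_explicit (t₀ a₀ : ℝ) (w Z Y : ℝ → ℝ)
    (hw : ContinuousOn w (Set.Ici t₀)) (hw0 : w t₀ = a₀)
    (hZcont : ContinuousOn Z (Set.Ici t₀))
    (hZmono : MonotoneOn Z (Set.Ici t₀)) (hZ0 : Z t₀ = 0)
    (hY : ∀ t ∈ Set.Ici t₀, Y t = w t + Z t)
    (hYge : ∀ t ∈ Set.Ici t₀, a₀ ≤ Y t)
    (hflat : ∀ s u, t₀ ≤ s → s ≤ u → (∀ rr ∈ Set.Icc s u, a₀ < Y rr) → Z u = Z s) :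
    ∀ t ∈ Set.Ici t₀, Z t = sSup ((fun s => max (a₀ - w s) 0) '' Set.Icc t₀ t) := by
  intro t ht
  have ht' : t₀ ≤ t := ht
  set S := (fun s => max (a₀ - w s) 0) '' Set.Icc t₀ t with hSdef
  have hne : S.Nonempty := ⟨_, ⟨t₀, ⟨le_refl t₀, ht'⟩, rfl⟩⟩
  have hIcc : Set.Icc t₀ t ⊆ Set.Ici t₀ := fun x hx => hx.1
  have hbdd : BddAbove S := by
    apply (isCompact_Icc.image_of_continuousOn ?_).bddAbove
    exact (continuousOn_const.sub (hw.mono hIcc)).sup continuousOn_const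
  have hZt0 : 0 ≤ Z t := by
    have := hZmono (Set.self_mem_Ici) ht ht'
    rw [hZ0] at this; exact this
  -- elementwise bound for each element of S
  have hub : ∀ x ∈ S, x ≤ Z t := by
    rintro x ⟨s, hs, rfl⟩
    have hsI : s ∈ Set.Ici t₀ := hs.1
    have h1 : a₀ ≤ w s + Z s := by rw [← hY s hsI]; exact hYge s hsI
    have h2 : Z s ≤ Z t := hZmono hsI ht hs.2
    exact max_le (by linarith) hZt0
  have hsup_le : sSup S ≤ Z t := csSup_le hne hub
  have hmem_le : ∀ s ∈ Set.Icc t₀ t, max (a₀ - w s) 0 ≤ sSup S := fun s hs =>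
    le_csSup hbdd ⟨s, hs, rfl⟩
  -- main direction : Z t ≤ sSup S
  have hle : Z t ≤ sSup S := by
    rcases eq_or_lt_of_le hZt0 with h0 | hpos
    · rw [← h0]
      exact le_trans (le_max_right _ _) (hmem_le t₀ ⟨le_refl _, ht'⟩)
    · set A := Set.Icc t₀ t ∩ Z ⁻¹' {Z t} with hAdef
      have hAclosed : IsClosed A :=
        (hZcont.mono hIcc).preimage_isClosed_of_isClosed isClosed_Icc isClosed_singleton
      have hAne : A.Nonempty := ⟨t, ⟨ht', le_refl t⟩, rfl⟩
      have hAbdd : BddBelow A := ⟨t₀, fun x hx => hx.1.1⟩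
      set r := sInf A with hrdef
      have hrA : r ∈ A := hAclosed.csInf_mem hAne hAbdd
      have hrt₀ : t₀ ≤ r := hrA.1.1
      have hrt : r ≤ t := hrA.1.2
      have hZr : Z r = Z t := hrA.2
      have hrgt : t₀ < r := by
        rcases eq_or_lt_of_le hrt₀ with h | h
        · exfalso; rw [← hZr, ← h, hZ0] at hpos; exact lt_irrefl _ hpos
        · exact h
      rw [← hZr]
      apply le_of_forall_pos_le_add
      intro ε hε
      obtain ⟨δ, hδ, H⟩ := Metric.continuousWithinAt_iff.mp (hZcont r hrt₀) ε hε
      set s := max t₀ (r - δ / 2) with hsdef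
      have hs1 : t₀ ≤ s := le_max_left _ _
      have hs2 : s < r := max_lt hrgt (by linarith)
      have hs3 : r - s < δ := by
        have : r - δ / 2 ≤ s := le_max_right _ _
        linarith
      -- Z s < Z r, so flat fails on [s, r]
      have hZs : Z s < Z r := by
        rcases lt_or_eq_of_le (hZmono hs1 hrt₀ hs2.le) with h | h
        · exact h
        · exfalso
          have hsA : s ∈ A := ⟨⟨hs1, hs2.le.trans hrt⟩, by
            simpa [Set.mem_preimage] using h.trans hZr⟩
          exact absurd (csInf_le hAbdd hsA) (not_le.mpr hs2)
      have hnot : ¬ (∀ rr ∈ Set.Icc s r, a₀ < Y rr) := by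
        intro hall
        have := hflat s r hs1 hs2.le hall
        exact absurd this (ne_of_gt hZs)
      push_neg at hnot
      obtain ⟨rr, hrr, hYrr⟩ := hnot
      have hrrI : rr ∈ Set.Ici t₀ := hs1.trans hrr.1
      have hYeq : Y rr = a₀ := le_antisymm hYrr (hYge rr hrrI)
      have hZrr : Z rr = a₀ - w rr := by
        have := hY rr hrrI; rw [hYeq] at this; linarith
      have hrrIcc : rr ∈ Set.Icc t₀ t := ⟨hrrI, hrr.2.trans hrt⟩
      have hZrr_le : Z rr ≤ sSup S := by
        rw [hZrr]
        exact le_trans (le_max_left _ _) (hmem_le rr hrrIcc)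
      have hdist : dist rr r < δ := by
        rw [Real.dist_eq, abs_of_nonpos (by linarith [hrr.2] : rr - r ≤ 0)]
        have := hrr.1
        linarith
      have := H hrrI hdist
      rw [Real.dist_eq] at this
      have habs := abs_lt.mp this
      linarith [habs.1]
  linarith
end
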